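/- For events {A_i}_{i=1}^m with P(A_i) > 0, letting S_i = ∑_j P(A_i ∩ A_j) and θ_i = frac(S_i/P(A_i)), one has KAT({A_i}) := ∑_i (θ_i P(A_i)²/(S_i + (1−θ_i)P(A_i)) + (1−θ_i)P(A_i)²/(S_i − θ_i P(A_i))) ≥ (∑_i P(A_i))² / ∑_{i,j} P(A_i ∩ A_j). -/
import Mathlib


open MeasureTheory Filter Set

theorem KAT_ge_chung_erdos {Ω : Type*} [MeasurableSpace Ω] (μ : Measure Ω)
    [IsProbabilityMeasure μ] (m : ℕ) (A : Fin m → Set Ω)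
    (hA : ∀ i, MeasurableSet (A i)) (hpos : ∀ i, 0 < μ (A i))
    (S : Fin m → ℝ) (hS : ∀ i, S i = ∑ j, (μ (A i ∩ A j)).toReal)
    (θ : Fin m → ℝ) (hθ : ∀ i, θ i = Int.fract (S i / (μ (A i)).toReal)) :
    ∑ i, (θ i * (μ (A i)).toReal ^ 2 / (S i + (1 - θ i) * (μ (A i)).toReal) +
        (1 - θ i) * (μ (A i)).toReal ^ 2 / (S i - θ i * (μ (A i)).toReal)) ≥
      (∑ i, (μ (A i)).toReal) ^ 2 / (∑ i, ∑ j, (μ (A i ∩ A j)).toReal) := by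
  set P : Fin m → ℝ := fun i => (μ (A i)).toReal with hP
  have hPpos : ∀ i, 0 < P i := by
    intro i
    exact ENNReal.toReal_pos (hpos i).ne' (measure_ne_top μ _)
  have hSP : ∀ i, P i ≤ S i := by
    intro i
    rw [hS i]
    calc P i = (μ (A i ∩ A i)).toReal := by rw [Set.inter_self]
    _ ≤ ∑ j, (μ (A i ∩ A j)).toReal := by
        exact Finset.single_le_sum (f := fun j => (μ (A i ∩ A j)).toReal)
          (fun j _ => ENNReal.toReal_nonneg) (Finset.mem_univ i)
  have hθ0 : ∀ i, 0 ≤ θ i := fun i => (hθ i) ▸ Int.fract_nonneg _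
  have hθ1 : ∀ i, θ i < 1 := fun i => (hθ i) ▸ Int.fract_lt_one _
  have hSpos : ∀ i, 0 < S i := fun i => lt_of_lt_of_le (hPpos i) (hSP i)
  have key : ∀ i, P i ^ 2 / S i ≤
      θ i * P i ^ 2 / (S i + (1 - θ i) * P i) + (1 - θ i) * P i ^ 2 / (S i - θ i * P i) := by
    intro i
    have hp := hPpos i
    have hs := hSpos i
    have ht0 := hθ0 i
    have ht1 := hθ1 i
    have ha : 0 < S i + (1 - θ i) * P i := by nlinarith
    have hb : 0 < S i - θ i * P i := by nlinarith [hSP i]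
    rw [div_add_div _ _ ha.ne' hb.ne', div_le_div_iff₀ hs (by positivity)]
    nlinarith [mul_nonneg ht0 (sub_nonneg.2 ht1.le), sq_nonneg (P i), mul_pos hp hp,
      mul_nonneg (mul_nonneg ht0 (sub_nonneg.2 ht1.le)) (sq_nonneg (P i))]
  calc (∑ i, P i) ^ 2 / (∑ i, ∑ j, (μ (A i ∩ A j)).toReal)
      = (∑ i, P i) ^ 2 / (∑ i, S i) := by
        congr 1; exact Finset.sum_congr rfl fun i _ => (hS i).symm
    _ ≤ ∑ i, P i ^ 2 / S i :=
        Finset.sq_sum_div_le_sum_sq_div _ P (fun i _ => hSpos i)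
    _ ≤ _ := Finset.sum_le_sum fun i _ => key i
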